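/- Let H be an m-hypergraph with edge ideal I. Then (I^∨)^2 has no non-minimal (embedded) associated primes if and only if for every independent set S ⊆ V, the 2-cover A_S is a sum of two 1-covers. -/

import Mathlib

open MvPolynomial Finset

noncomputable section

/-- A `k`-cover of a hypergraph with edge set `E`: a nonzero tuple whose entries
sum to at least `k` over every edge. -/
def IsCover {V : Type*} (E : Finset (Finset V)) (k : ℕ) (a : V → ℕ) : Prop :=
  a ≠ 0 ∧ ∀ e ∈ E, k ≤ ∑ i ∈ e, a i

/-- `a` is a sum of two 1-covers. -/
def SumTwoOneCovers {V : Type*} (E : Finset (Finset V)) (a : V → ℕ) : Prop :=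
  ∃ b c : V → ℕ, IsCover E 1 b ∧ IsCover E 1 c ∧ a = b + c

/-- An independent set: no edge is contained in `S`. -/
def IsIndep {V : Type*} (E : Finset (Finset V)) (S : Finset V) : Prop :=
  ∀ e ∈ E, ¬ e ⊆ S

/-- `i` is in the neighborhood of `S`: `i ∉ S` and some edge consists of `i`
together with vertices of `S`. -/
def InNbhd {V : Type*} (E : Finset (Finset V)) (S : Finset V) (i : V) : Prop :=
  i ∉ S ∧ ∃ e ∈ E, i ∈ e ∧ ∀ j ∈ e, j ≠ i → j ∈ S

open Classical in
/-- The 2-cover `A_S` attached to an independent set `S`: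
`0` on `S`, `2` on `N(S)`, and `1` elsewhere. -/
noncomputable def indepCover {V : Type*} (E : Finset (Finset V)) (S : Finset V) : V → ℕ :=
  fun i => if i ∈ S then 0 else if InNbhd E S i then 2 else 1

/-- The Alexander dual of the edge ideal: `⋂_{edges e} (x_i : i ∈ e)`. -/
noncomputable def dualIdeal {V : Type*} (K : Type*) [Field K] (E : Finset (Finset V)) :
    Ideal (MvPolynomial V K) :=
  ⨅ e ∈ E, Ideal.span (X '' (e : Set V))

/-- The monomial `x_1^{a_1} ⋯ x_n^{a_n}` attached to a tuple `a`. -/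
noncomputable def coverMonomial {V : Type*} [Fintype V] (K : Type*) [Field K] (a : V → ℕ) :
    MvPolynomial V K :=
  ∏ i, X i ^ a i

/-- Connectedness of a hypergraph: any two vertices are linked by a chain of
vertices in which consecutive vertices share an edge. -/
def HConnected {V : Type*} (E : Finset (Finset V)) : Prop :=
  ∀ x y : V, ∃ l : List V, l.head? = some x ∧ l.getLast? = some y ∧
    l.Chain' fun a b => ∃ e ∈ E, a ∈ e ∧ b ∈ e

/-- The cyclic 3-hypergraph with edges `{x_1,x_2,x_3}, {x_3,x_4,x_5}, …`
(0-based: `{2j, 2j+1, 2j+2}` modulo `n`). -/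
def cyc3 (n : ℕ) (hn : 0 < n) : Finset (Finset (Fin n)) :=
  (Finset.range ((n + 1) / 2)).image fun j =>
    ({⟨(2 * j) % n, Nat.mod_lt _ hn⟩, ⟨(2 * j + 1) % n, Nat.mod_lt _ hn⟩,
      ⟨(2 * j + 2) % n, Nat.mod_lt _ hn⟩} : Finset (Fin n))

/-- The alternating tuple: `1` on odd vertices `x_1, x_3, …` (0-based even
indices), `0` on even vertices. -/
def altCover (n : ℕ) : Fin n → ℕ :=
  fun i => if (i : ℕ) % 2 = 0 then 1 else 0

namespace Stmt4Aux
variable {K : Type*} [Field K] {n : ℕ}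

/-- The prime generated by the variables of an edge. -/
def Pe (K : Type*) [Field K] {n : ℕ} (e : Finset (Fin n)) : Ideal (MvPolynomial (Fin n) K) :=
  Ideal.span (X '' (e : Set (Fin n)))

/-- u ↦ polynomial in t obtained by substituting `t·x_i` for `x_i`, `i ∈ e`. -/
def phiE (K : Type*) [Field K] {n : ℕ} (e : Finset (Fin n)) :
    MvPolynomial (Fin n) K →ₐ[K] Polynomial (MvPolynomial (Fin n) K) :=
  aeval fun i => if i ∈ e then Polynomial.X * Polynomial.C (X i) else Polynomial.C (X i)

lemma phiE_monomial (e : Finset (Fin n)) (a : Fin n →₀ ℕ) (c : K) :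
    phiE K e (monomial a c) =
      Polynomial.C (monomial a c) * Polynomial.X ^ (∑ i ∈ e, a i) := by
  classical
  rw [phiE, aeval_monomial]
  have h1 : (Finsupp.prod a fun i k =>
      (if i ∈ e then Polynomial.X * Polynomial.C (X i) else Polynomial.C (X i)) ^ k)
      = Polynomial.C ((Finsupp.prod a fun i k => (X i ^ k : MvPolynomial (Fin n) K)))
        * Polynomial.X ^ (∑ i ∈ a.support, if i ∈ e then a i else 0) := by
    rw [Finsupp.prod, Finsupp.prod, map_prod, ← Finset.prod_pow_eq_pow_sum,
      ← Finset.prod_mul_distrib]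
    refine Finset.prod_congr rfl fun i _ => ?_
    by_cases hi : i ∈ e
    · rw [if_pos hi, if_pos hi, mul_pow, ← Polynomial.C_pow, mul_comm]
    · rw [if_neg hi, if_neg hi, ← Polynomial.C_pow, pow_zero, mul_one]
  rw [h1]
  have h2 : (∑ i ∈ a.support, if i ∈ e then a i else 0) = ∑ i ∈ e, a i := by
    rw [Finset.sum_ite_mem]
    exact Finset.sum_subset (Finset.inter_subset_right) (fun i hi hni => by
      simp only [Finset.mem_inter, not_and] at hni ⊢
      by_contra h
      exact hni (Finsupp.mem_support_iff.mpr h) hi)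
  rw [h2, monomial_eq]
  simp only [map_mul, algebraMap_eq, Polynomial.algebraMap_apply]
  ring


lemma eval_one_phiE (e : Finset (Fin n)) (f : MvPolynomial (Fin n) K) :
    Polynomial.eval 1 (phiE K e f) = f := by
  have : (Polynomial.evalRingHom (1 : MvPolynomial (Fin n) K)).comp
      (phiE K e).toRingHom = RingHom.id _ := by
    apply MvPolynomial.ringHom_ext
    · intro c
      simp [phiE]
    · intro i
      by_cases hi : i ∈ e <;> simp [phiE, hi]
  exact congrArg (fun g => g f) (congrArg DFunLike.coe this)

lemma prod_X_pow_mem (e : Finset (Fin n)) (a : Fin n →₀ ℕ) :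
    ∀ (t : Finset (Fin n)), t ⊆ e →
      (∏ i ∈ t, (X i : MvPolynomial (Fin n) K) ^ a i) ∈ (Pe K e) ^ (∑ i ∈ t, a i) := by
  classical
  intro t
  induction t using Finset.induction_on with
  | empty => intro _; simp [Ideal.one_eq_top]
  | @insert j t hj ih =>
    intro hsub
    rw [Finset.prod_insert hj, Finset.sum_insert hj, pow_add]
    refine Ideal.mul_mem_mul (Ideal.pow_mem_pow ?_ _) (ih (fun i hi => hsub (Finset.mem_insert_of_mem hi)))
    exact Ideal.subset_span ⟨j, by simp [hsub (Finset.mem_insert_self j t)]⟩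

lemma prod_X_pow_eq (a : Fin n →₀ ℕ) (t : Finset (Fin n)) :
    (∏ i ∈ t, (X i : MvPolynomial (Fin n) K) ^ a i)
      = monomial (∑ i ∈ t, Finsupp.single i (a i)) 1 := by
  classical
  induction t using Finset.induction_on with
  | empty => simp
  | @insert j t hj ih =>
    rw [Finset.prod_insert hj, Finset.sum_insert hj, ih, X_pow_eq_monomial,
      monomial_mul, one_mul]

lemma monomial_mem_Pe_pow (e : Finset (Fin n)) (a : Fin n →₀ ℕ) (c : K) :
    monomial a c ∈ (Pe K e) ^ (∑ i ∈ e, a i) := by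
  classical
  set s : Fin n →₀ ℕ := ∑ i ∈ e, Finsupp.single i (a i) with hs
  have hsapp : ∀ j, s j = if j ∈ e then a j else 0 := by
    intro j
    rw [hs, Finsupp.finset_sum_apply]
    simp only [Finsupp.single_apply]
    rw [Finset.sum_ite_eq' e j (fun i => a i)]
  have hle : s ≤ a := by
    intro j
    rw [hsapp j]
    split <;> simp
  have key : monomial a c = monomial (a - s) c * monomial s 1 := by
    rw [monomial_mul, mul_one, tsub_add_cancel_of_le hle]
  rw [key, hs, ← prod_X_pow_eq a e]
  exact Ideal.mul_mem_left _ _ (prod_X_pow_mem e a e le_rfl)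

lemma coeff_phiE_mem (e : Finset (Fin n)) (f : MvPolynomial (Fin n) K) (d : ℕ) :
    (phiE K e f).coeff d ∈ (Pe K e) ^ d := by
  classical
  have hrw : (phiE K e f).coeff d
      = ∑ a ∈ f.support, ((phiE K e (monomial a (f.coeff a))).coeff d) := by
    conv_lhs => rw [← support_sum_monomial_coeff f]
    rw [map_sum, Polynomial.finset_sum_coeff]
  rw [hrw]
  refine Ideal.sum_mem _ fun a ha => ?_
  rw [phiE_monomial, Polynomial.coeff_C_mul, Polynomial.coeff_X_pow]
  by_cases hd : d = (∑ i ∈ e, a i)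
  · rw [if_pos hd, mul_one, hd]
    exact monomial_mem_Pe_pow e a _
  · rw [if_neg hd, mul_zero]
    exact Submodule.zero_mem _

lemma coeff_coeff_phiE (e : Finset (Fin n)) (f : MvPolynomial (Fin n) K) (d : ℕ)
    (a : Fin n →₀ ℕ) :
    MvPolynomial.coeff a ((phiE K e f).coeff d)
      = if (∑ i ∈ e, a i) = d then f.coeff a else 0 := by
  classical
  have hrw : (phiE K e f).coeff d
      = ∑ b ∈ f.support, ((phiE K e (monomial b (f.coeff b))).coeff d) := by
    conv_lhs => rw [← support_sum_monomial_coeff f]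
    rw [map_sum, Polynomial.finset_sum_coeff]
  rw [hrw, MvPolynomial.coeff_sum]
  have hterm : ∀ b ∈ f.support,
      MvPolynomial.coeff a ((phiE K e (monomial b (f.coeff b))).coeff d)
        = if b = a then (if (∑ i ∈ e, a i) = d then f.coeff a else 0) else 0 := by
    intro b _
    rw [phiE_monomial, Polynomial.coeff_C_mul, Polynomial.coeff_X_pow]
    by_cases hb : b = a
    · subst hb
      by_cases hd : d = (∑ i ∈ e, b i)
      · simp [hd, MvPolynomial.coeff_monomial]
      · simp [hd, Ne.symm hd]
    · by_cases hd : d = (∑ i ∈ e, b i) <;>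
        simp [hd, MvPolynomial.coeff_monomial, hb]
  rw [Finset.sum_congr rfl hterm, Finset.sum_ite_eq' f.support a]
  by_cases ha : a ∈ f.support
  · rw [if_pos ha]
  · rw [if_neg ha]
    rw [MvPolynomial.notMem_support_iff] at ha
    rw [ha]
    simp

lemma mem_Pe_pow_iff (e : Finset (Fin n)) (k : ℕ) (f : MvPolynomial (Fin n) K) :
    f ∈ (Pe K e) ^ k ↔ (Polynomial.X : Polynomial (MvPolynomial (Fin n) K)) ^ k ∣ phiE K e f := by
  constructor
  · intro hf
    have hmap : Ideal.map (phiE K e).toRingHom (Pe K e) ≤ Ideal.span {Polynomial.X} := by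
      rw [Pe, Ideal.map_span, Set.image_image]
      refine Ideal.span_le.mpr ?_
      rintro - ⟨i, hi', rfl⟩
      have hi : i ∈ e := hi'
      simp only [SetLike.mem_coe, Ideal.mem_span_singleton]
      have : (phiE K e) (X i) = Polynomial.X * Polynomial.C (X i) := by
        rw [phiE, aeval_X, if_pos hi]
      rw [AlgHom.toRingHom_eq_coe, RingHom.coe_coe, this]
      exact Dvd.intro _ rfl
    have h1 : phiE K e f ∈ Ideal.map (phiE K e).toRingHom ((Pe K e) ^ k) :=
      Ideal.mem_map_of_mem _ hf
    rw [Ideal.map_pow] at h1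
    have h2 := (Ideal.pow_right_mono hmap k) h1
    rwa [Ideal.span_singleton_pow, Ideal.mem_span_singleton] at h2
  · rintro ⟨q, hq⟩
    have hcoeff : ∀ d, d < k → (phiE K e f).coeff d = 0 := by
      intro d hd
      rw [hq, mul_comm, Polynomial.coeff_mul_X_pow', if_neg (by omega)]
    have hf : f = ∑ d ∈ Finset.range ((phiE K e f).natDegree + 1), (phiE K e f).coeff d := by
      conv_lhs => rw [← eval_one_phiE e f]
      rw [Polynomial.eval_eq_sum_range]
      simp
    rw [hf]
    refine Ideal.sum_mem _ fun d _ => ?_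
    by_cases hd : d < k
    · rw [hcoeff d hd]; exact Submodule.zero_mem _
    · exact Ideal.pow_le_pow_right (by omega) (coeff_phiE_mem e f d)

lemma X_mem_Pe_iff (e : Finset (Fin n)) (j : Fin n) :
    (X j : MvPolynomial (Fin n) K) ∈ Pe K e ↔ j ∈ e := by
  constructor
  · intro h
    rw [Pe, mem_ideal_span_X_image] at h
    obtain ⟨i, hi, hne⟩ := h (Finsupp.single j 1) (by simp [support_X])
    rw [Finsupp.single_apply_ne_zero] at hne
    exact hne.1 ▸ hi
  · intro h
    exact Ideal.subset_span ⟨j, h, rfl⟩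

lemma Pe_isPrime (e : Finset (Fin n)) : (Pe K e).IsPrime := by
  constructor
  · intro h
    have h1 : (1 : MvPolynomial (Fin n) K) ∈ Pe K e := h ▸ Submodule.mem_top
    rw [← pow_one (Pe K e), mem_Pe_pow_iff, pow_one, map_one] at h1
    exact Polynomial.not_isUnit_X (isUnit_of_dvd_one h1)
  · intro f g hfg
    rw [← pow_one (Pe K e), mem_Pe_pow_iff, pow_one, map_mul] at hfg
    rcases (Polynomial.prime_X).2.2 _ _ hfg with h | h <;>
      [left; right] <;> rw [← pow_one (Pe K e), mem_Pe_pow_iff, pow_one] <;> exact h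

/-- `Pe^2` is primary. -/
lemma Pe_sq_primary (e : Finset (Fin n)) {w z : MvPolynomial (Fin n) K}
    (h : w * z ∈ (Pe K e) ^ 2) (hz : z ∉ (Pe K e) ^ 2) : w ∈ Pe K e := by
  rw [mem_Pe_pow_iff] at h hz
  rw [← pow_one (Pe K e), mem_Pe_pow_iff, pow_one]
  rw [map_mul] at h
  by_contra hw
  have hXw : ¬ (Polynomial.X : Polynomial (MvPolynomial (Fin n) K)) ∣ phiE K e w := hw
  have hXz : (Polynomial.X : Polynomial (MvPolynomial (Fin n) K)) ∣ phiE K e z := by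
    rcases (Polynomial.prime_X).2.2 _ _ (dvd_trans (show (Polynomial.X : Polynomial (MvPolynomial (Fin n) K)) ∣ Polynomial.X ^ 2 from
        dvd_pow_self _ two_ne_zero) h) with h1 | h1
    · exact absurd h1 hXw
    · exact h1
  obtain ⟨q, hq⟩ := hXz
  apply hz
  rw [hq]
  obtain ⟨r, hr⟩ : (Polynomial.X : Polynomial (MvPolynomial (Fin n) K)) ∣ q := by
    have h2 : Polynomial.X ^ 2 ∣ phiE K e w * (Polynomial.X * q) := by rw [← hq]; exact h
    have h3 : (Polynomial.X : Polynomial (MvPolynomial (Fin n) K)) ∣ phiE K e w * q := by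
      have := h2
      rw [pow_two] at this
      rcases this with ⟨r, hr⟩
      refine ⟨r, ?_⟩
      have hX0 : (Polynomial.X : Polynomial (MvPolynomial (Fin n) K)) ≠ 0 := Polynomial.X_ne_zero
      apply mul_left_cancel₀ hX0
      calc Polynomial.X * (phiE K e w * q) = phiE K e w * (Polynomial.X * q) := by ring
        _ = Polynomial.X * Polynomial.X * r := hr
        _ = Polynomial.X * (Polynomial.X * r) := by ring
    rcases (Polynomial.prime_X).2.2 _ _ h3 with h4 | h4
    · exact absurd h4 hXw
    · exact h4
  exact ⟨r, by rw [hr]; ring⟩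

lemma monomial_mem_Pe_pow_of_le (e : Finset (Fin n)) (a : Fin n →₀ ℕ) (c : K) (k : ℕ)
    (h : k ≤ ∑ i ∈ e, a i) : monomial a c ∈ (Pe K e) ^ k :=
  Ideal.pow_le_pow_right h (monomial_mem_Pe_pow e a c)

lemma support_deg_ge_of_mem_Pe_pow (e : Finset (Fin n)) (k : ℕ)
    {f : MvPolynomial (Fin n) K} (hf : f ∈ (Pe K e) ^ k) :
    ∀ a ∈ f.support, k ≤ ∑ i ∈ e, a i := by
  intro a ha
  by_contra hlt
  push_neg at hlt
  rw [mem_Pe_pow_iff] at hf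
  obtain ⟨q, hq⟩ := hf
  have h0 : (phiE K e f).coeff (∑ i ∈ e, a i) = 0 := by
    rw [hq, mul_comm, Polynomial.coeff_mul_X_pow', if_neg (by omega)]
  have := coeff_coeff_phiE e f (∑ i ∈ e, a i) a
  rw [h0, if_pos rfl] at this
  exact (MvPolynomial.mem_support_iff.mp ha) this.symm


section Edges
variable {K : Type*} [Field K] {n : ℕ} (E : Finset (Finset (Fin n)))

lemma mem_dualIdeal (f : MvPolynomial (Fin n) K) :
    f ∈ dualIdeal K E ↔ ∀ e ∈ E, f ∈ Pe K e := by
  simp [dualIdeal, Ideal.mem_iInf, Pe]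

lemma dual_le_Pe {e : Finset (Fin n)} (he : e ∈ E) : dualIdeal K E ≤ Pe K e :=
  fun f hf => (mem_dualIdeal E f).mp hf e he

lemma prod_le_dual : (∏ e ∈ E, Pe K e) ≤ dualIdeal K E := by
  refine le_iInf₂ fun e he => ?_
  exact le_trans Ideal.prod_le_inf (Finset.inf_le he)

lemma exists_Pe_le_of_prime {P : Ideal (MvPolynomial (Fin n) K)} (hP : P.IsPrime)
    (hle : (dualIdeal K E) ^ 2 ≤ P) : ∃ e ∈ E, Pe K e ≤ P := by
  have h1 : (∏ e ∈ E, Pe K e) ^ 2 ≤ P :=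
    le_trans (Ideal.pow_right_mono (prod_le_dual E) 2) hle
  have h2 : (∏ e ∈ E, Pe K e) ≤ P := (Ideal.IsPrime.pow_le_iff two_ne_zero).mp h1
  exact hP.prod_le.mp h2

variable {m : ℕ}

lemma edge_eq_of_subset (hm : ∀ e ∈ E, e.card = m) {e e' : Finset (Fin n)} (he : e ∈ E) (he' : e' ∈ E)
    (h : e ⊆ e') : e = e' :=
  Finset.eq_of_subset_of_card_le h (le_of_eq ((hm e' he').trans (hm e he).symm))

lemma Pe_mem_minimalPrimes (hm : ∀ e ∈ E, e.card = m) {e : Finset (Fin n)} (he : e ∈ E) :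
    Pe K e ∈ ((dualIdeal K E) ^ 2).minimalPrimes := by
  constructor
  · exact ⟨Pe_isPrime e, le_trans (Ideal.pow_le_self two_ne_zero) (dual_le_Pe E he)⟩
  · rintro Q ⟨hQp, hQle⟩ hQP
    obtain ⟨e', he', hPe'⟩ := exists_Pe_le_of_prime E hQp hQle
    have hsub : e' ⊆ e := fun i hi =>
      (X_mem_Pe_iff e i).mp (hQP (hPe' ((X_mem_Pe_iff e' i).mpr hi)))
    rw [← edge_eq_of_subset E hm he' he hsub]
    exact hPe'

lemma minimalPrimes_subset {P : Ideal (MvPolynomial (Fin n) K)}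
    (hP : P ∈ ((dualIdeal K E) ^ 2).minimalPrimes) : ∃ e ∈ E, P = Pe K e := by
  obtain ⟨⟨hPp, hPle⟩, hmin⟩ := hP
  obtain ⟨e, he, hPe⟩ := exists_Pe_le_of_prime E hPp hPle
  refine ⟨e, he, le_antisymm ?_ hPe⟩
  exact hmin ⟨Pe_isPrime e, le_trans (Ideal.pow_le_self two_ne_zero) (dual_le_Pe E he)⟩ hPe

end Edges

section Covers
open Pointwise
variable {K : Type*} [Field K] {n : ℕ} (E : Finset (Finset (Fin n)))

/-- Finsupp k-covers. -/
def FsCov (k : ℕ) : Set (Fin n →₀ ℕ) := {d | ∀ e ∈ E, k ≤ ∑ i ∈ e, d i}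

lemma monomial_mem_dual {d : Fin n →₀ ℕ} (c : K) (hd : d ∈ FsCov E 1) :
    monomial d c ∈ dualIdeal K E :=
  (mem_dualIdeal E _).mpr fun e he => by
    have := monomial_mem_Pe_pow_of_le e d c 1 (hd e he)
    rwa [pow_one] at this

lemma monomial_mem_dual_sq {d : Fin n →₀ ℕ} {b c : Fin n →₀ ℕ} (hb : b ∈ FsCov E 1)
    (hc : c ∈ FsCov E 1) (hbc : d = b + c) (r : K) :
    monomial d r ∈ (dualIdeal K E) ^ 2 := by
  have : monomial d r = monomial b (1 : K) * monomial c r := by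
    rw [monomial_mul, one_mul, hbc]
  rw [this, pow_two]
  exact Ideal.mul_mem_mul (monomial_mem_dual E 1 hb) (monomial_mem_dual E r hc)

lemma dual_eq_span : dualIdeal K E
    = Ideal.span ((fun d => monomial d (1 : K)) '' FsCov E 1) := by
  refine le_antisymm ?_ (Ideal.span_le.mpr ?_)
  · intro f hf
    have hsupp : ∀ a ∈ f.support, a ∈ FsCov E 1 := by
      intro a ha e he
      exact support_deg_ge_of_mem_Pe_pow e 1
        (by rw [pow_one]; exact (mem_dualIdeal E f).mp hf e he) a ha
    rw [mem_ideal_span_monomial_image]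
    exact fun a ha => ⟨a, hsupp a ha, le_rfl⟩
  · rintro - ⟨d, hd, rfl⟩
    exact monomial_mem_dual E 1 hd

lemma monomial_mem_dual_sq_iff {d : Fin n →₀ ℕ} :
    monomial d (1 : K) ∈ (dualIdeal K E) ^ 2
      ↔ ∃ b ∈ FsCov E 1, ∃ c ∈ FsCov E 1, b + c ≤ d := by
  constructor
  · intro h
    rw [pow_two, dual_eq_span, Ideal.span_mul_span'] at h
    have himg : ((fun d => monomial d (1 : K)) '' FsCov E 1)
        * ((fun d => monomial d (1 : K)) '' FsCov E 1)
        = (fun d => monomial d (1 : K)) '' (Set.image2 (· + ·) (FsCov E 1) (FsCov E 1)) := by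
      rw [← Set.image2_mul, Set.image2_image_left, Set.image2_image_right]
      ext p
      simp only [Set.mem_image2, Set.mem_image]
      constructor
      · rintro ⟨b, hb, c, hc, rfl⟩
        exact ⟨b + c, ⟨b, hb, c, hc, rfl⟩, by rw [monomial_mul, one_mul]⟩
      · rintro ⟨q, ⟨b, hb, c, hc, rfl⟩, rfl⟩
        exact ⟨b, hb, c, hc, by rw [monomial_mul, one_mul]⟩
    rw [himg, mem_ideal_span_monomial_image] at h
    obtain ⟨s, hs, hsle⟩ := h d (by simp [support_monomial])
    obtain ⟨b, hb, c, hc, rfl⟩ := hs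
    exact ⟨b, hb, c, hc, hsle⟩
  · rintro ⟨b, hb, c, hc, hle⟩
    have : d = b + (d - b) := by
      have h1 : b ≤ d := le_trans le_self_add hle
      rw [add_tsub_cancel_of_le h1]
    refine monomial_mem_dual_sq E hb (fun e he => ?_) this 1
    have h2 : c ≤ d - b := by
      rwa [add_comm, ← le_tsub_iff_right (le_trans le_self_add
        (add_comm b c ▸ hle))] at hle
    exact le_trans (hc e he) (Finset.sum_le_sum fun i _ => h2 i)

end Covers

section Comb
variable {n : ℕ} {E : Finset (Finset (Fin n))}

lemma sumTwo_of_le {a b c : Fin n → ℕ}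
    (hb : IsCover E 1 b) (hc : IsCover E 1 c) (hle : ∀ i, b i + c i ≤ a i) :
    SumTwoOneCovers E a := by
  have hcb : ∀ i, c i ≤ a i - b i := fun i =>
    Nat.le_sub_of_add_le (by rw [Nat.add_comm]; exact hle i)
  refine ⟨b, fun i => a i - b i, hb, ⟨?_, ?_⟩, ?_⟩
  · obtain ⟨i, hi⟩ := Function.ne_iff.mp hc.1
    refine Function.ne_iff.mpr ⟨i, ?_⟩
    have h1 := hcb i
    simp only [Pi.zero_apply] at hi ⊢
    omega
  · intro e he
    exact le_trans (hc.2 e he) (Finset.sum_le_sum fun i _ => hcb i)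
  · funext i
    have := hle i
    simp only [Pi.add_apply]
    omega

lemma one_le_indepCover {S : Finset (Fin n)} {i : Fin n} (hiS : i ∉ S) :
    1 ≤ indepCover E S i := by
  simp only [indepCover]
  rw [if_neg hiS]
  split <;> omega

lemma indepCover_isCover (hE : E.Nonempty) {S : Finset (Fin n)} (hS : IsIndep E S) :
    IsCover E 2 (indepCover E S) := by
  constructor
  · obtain ⟨e, he⟩ := hE
    obtain ⟨i, hie, hiS⟩ := Finset.not_subset.mp (hS e he)
    refine Function.ne_iff.mpr ⟨i, ?_⟩
    have := one_le_indepCover (E := E) hiS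
    simp only [Pi.zero_apply]
    omega
  · intro e he
    obtain ⟨i, hie, hiS⟩ := Finset.not_subset.mp (hS e he)
    by_cases hone : ∀ j ∈ e, j ≠ i → j ∈ S
    · have hval : indepCover E S i = 2 := by
        simp only [indepCover]
        rw [if_neg hiS, if_pos ⟨hiS, e, he, hie, hone⟩]
      calc (2 : ℕ) = indepCover E S i := hval.symm
        _ ≤ ∑ k ∈ e, indepCover E S k :=
            Finset.single_le_sum (fun k _ => Nat.zero_le _) hie
    · push_neg at hone
      obtain ⟨j, hje, hji, hjS⟩ := hone
      have h1 := one_le_indepCover (E := E) (S := S) hiS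
      have h2 := one_le_indepCover (E := E) (S := S) hjS
      have hsub : ({i, j} : Finset (Fin n)) ⊆ e := by
        intro k hk
        rcases Finset.mem_insert.mp hk with rfl | hk
        · exact hie
        · exact (Finset.mem_singleton.mp hk) ▸ hje
      calc (2 : ℕ) ≤ indepCover E S i + indepCover E S j := by omega
        _ = ∑ k ∈ ({i, j} : Finset (Fin n)), indepCover E S k :=
            (Finset.sum_pair (Ne.symm hji)).symm
        _ ≤ ∑ k ∈ e, indepCover E S k :=
            Finset.sum_le_sum_of_subset hsub

lemma two_cover_ge_indepCover {a : Fin n → ℕ} (ha : IsCover E 2 a) :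
    ∃ S, IsIndep E S ∧ ∀ i, indepCover E S i ≤ a i := by
  classical
  refine ⟨Finset.univ.filter (fun i => a i = 0), ?_, ?_⟩
  · intro e he hsub
    have h0 : ∑ i ∈ e, a i = 0 :=
      Finset.sum_eq_zero fun i hi => (Finset.mem_filter.mp (hsub hi)).2
    have := ha.2 e he
    omega
  · intro i
    simp only [indepCover]
    by_cases hiS : i ∈ Finset.univ.filter (fun i => a i = 0)
    · rw [if_pos hiS]; omega
    · rw [if_neg hiS]
      have hai : a i ≠ 0 := fun h => hiS (Finset.mem_filter.mpr ⟨Finset.mem_univ i, h⟩)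
      by_cases hnb : InNbhd E (Finset.univ.filter (fun i => a i = 0)) i
      · rw [if_pos hnb]
        obtain ⟨-, e, he, hie, hall⟩ := hnb
        have hsum : ∑ j ∈ e, a j = a i := by
          refine Finset.sum_eq_single i (fun j hj hne => ?_) (fun h => absurd hie h)
          exact (Finset.mem_filter.mp (hall j hj hne)).2
        have := ha.2 e he
        omega
      · rw [if_neg hnb]; omega

lemma two_cover_decomp (hE : E.Nonempty)
    (hRHS : ∀ S : Finset (Fin n), IsIndep E S → SumTwoOneCovers E (indepCover E S))
    {a : Fin n → ℕ} (ha : IsCover E 2 a) : SumTwoOneCovers E a := by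
  obtain ⟨S, hS, hle⟩ := two_cover_ge_indepCover ha
  obtain ⟨b, c, hb, hc, heq⟩ := hRHS S hS
  refine sumTwo_of_le hb hc fun i => ?_
  have h1 := congrFun heq i
  have h2 := hle i
  simp only [Pi.add_apply] at h1
  omega

end Comb

section Key
variable {K : Type*} [Field K] {n : ℕ} (E : Finset (Finset (Fin n)))

lemma exists_avoider {e : Finset (Fin n)} :
    ∀ F : Finset (Finset (Fin n)), (∀ e' ∈ F, ∃ j, j ∈ e' ∧ j ∉ e) →
      ∃ s : MvPolynomial (Fin n) K, s ∉ Pe K e ∧ ∀ e' ∈ F, s ∈ Pe K e' := by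
  intro F
  induction F using Finset.induction_on with
  | empty =>
    intro _
    refine ⟨1, fun h1 => (Pe_isPrime e).ne_top ((Ideal.eq_top_iff_one _).mpr h1), by simp⟩
  | @insert e'' F he'' ih =>
    intro hF
    obtain ⟨s, hs1, hs2⟩ := ih fun e' he' => hF e' (Finset.mem_insert_of_mem he')
    obtain ⟨j, hj1, hj2⟩ := hF e'' (Finset.mem_insert_self _ _)
    refine ⟨X j * s, ?_, ?_⟩
    · intro h
      rcases (Pe_isPrime e).mem_or_mem h with h | h
      · exact hj2 ((X_mem_Pe_iff e j).mp h)
      · exact hs1 h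
    · intro e' he'
      rcases Finset.mem_insert.mp he' with rfl | he'
      · exact Ideal.mul_mem_right s _ ((X_mem_Pe_iff e' j).mpr hj1)
      · exact Ideal.mul_mem_left _ _ (hs2 e' he')

lemma dual_sq_eq (hE : E.Nonempty)
    (hRHS : ∀ S : Finset (Fin n), IsIndep E S → SumTwoOneCovers E (indepCover E S)) :
    (dualIdeal K E) ^ 2 = ⨅ e ∈ E, (Pe K e) ^ 2 := by
  refine le_antisymm (le_iInf₂ fun e he => Ideal.pow_right_mono (dual_le_Pe E he) 2) ?_
  intro f hf
  have hf' : ∀ e ∈ E, f ∈ (Pe K e) ^ 2 := by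
    intro e he
    exact (Ideal.mem_iInf.mp ((Ideal.mem_iInf.mp hf) e)) he
  rw [← support_sum_monomial_coeff f]
  refine Ideal.sum_mem _ fun a ha => ?_
  have hdeg : ∀ e ∈ E, 2 ≤ ∑ i ∈ e, a i := fun e he =>
    support_deg_ge_of_mem_Pe_pow e 2 (hf' e he) a ha
  have hacov : IsCover E 2 (⇑a) := by
    refine ⟨?_, fun e he => hdeg e he⟩
    obtain ⟨e0, he0⟩ := hE
    intro h0
    have : ∑ i ∈ e0, a i = 0 := Finset.sum_eq_zero fun i _ => congrFun h0 i
    have := hdeg e0 he0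
    omega
  obtain ⟨b, c, hb, hc, heq⟩ := two_cover_decomp hE hRHS hacov
  have hbf : Finsupp.equivFunOnFinite.symm b ∈ FsCov E 1 := by
    intro e he
    calc (1 : ℕ) ≤ ∑ i ∈ e, b i := hb.2 e he
      _ = ∑ i ∈ e, (Finsupp.equivFunOnFinite.symm b) i :=
          Finset.sum_congr rfl fun i _ => by simp
  have hcf : Finsupp.equivFunOnFinite.symm c ∈ FsCov E 1 := by
    intro e he
    calc (1 : ℕ) ≤ ∑ i ∈ e, c i := hc.2 e he
      _ = ∑ i ∈ e, (Finsupp.equivFunOnFinite.symm c) i :=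
          Finset.sum_congr rfl fun i _ => by simp
  refine monomial_mem_dual_sq E hbf hcf ?_ (f.coeff a)
  ext i
  have := congrFun heq i
  simp only [Pi.add_apply] at this
  simpa using this

end Key

end Stmt4Aux

open Stmt4Aux in
theorem stmt4 {K : Type*} [Field K] {n m : ℕ} (E : Finset (Finset (Fin n)))
    (hE : E.Nonempty) (hm : ∀ e ∈ E, e.card = m) :
    (∀ P : Ideal (MvPolynomial (Fin n) K),
        IsAssociatedPrime P (MvPolynomial (Fin n) K ⧸ ((dualIdeal K E) ^ 2)) →
          P ∈ ((dualIdeal K E) ^ 2).minimalPrimes) ↔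
      (∀ S : Finset (Fin n), IsIndep E S → SumTwoOneCovers E (indepCover E S)) := by
  constructor
  · -- no embedded primes ⇒ every A_S decomposes
    intro hAss S hS
    by_contra hno
    have hc2 : IsCover E 2 (indepCover E S) := indepCover_isCover hE hS
    set d : Fin n →₀ ℕ := Finsupp.equivFunOnFinite.symm (indepCover E S) with hd
    have hdsum : ∀ e : Finset (Fin n), ∑ i ∈ e, d i = ∑ i ∈ e, indepCover E S i :=
      fun e => Finset.sum_congr rfl fun i _ => by simp [hd]
    have hyJ : monomial d (1 : K) ∉ (dualIdeal K E) ^ 2 := by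
      intro h
      obtain ⟨b, hb, c, hc, hle⟩ := (monomial_mem_dual_sq_iff E).mp h
      have hble : ∀ i, b i + c i ≤ indepCover E S i := by
        intro i
        have h1 : (b + c) i ≤ d i := hle i
        simpa [hd] using h1
      refine hno (sumTwo_of_le ⟨?_, fun e he => hb e he⟩ ⟨?_, fun e he => hc e he⟩ hble)
      · obtain ⟨e0, he0⟩ := hE
        intro h0
        have h1 : ∑ i ∈ e0, b i = 0 := Finset.sum_eq_zero fun i _ => congrFun h0 i
        have := hb e0 he0
        omega
      · obtain ⟨e0, he0⟩ := hE
        intro h0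
        have h1 : ∑ i ∈ e0, c i = 0 := Finset.sum_eq_zero fun i _ => congrFun h0 i
        have := hc e0 he0
        omega
    set y' := Ideal.Quotient.mk ((dualIdeal K E) ^ 2) (monomial d (1 : K)) with hy'def
    have hy' : y' ≠ 0 := by
      rw [hy'def, Ne, Ideal.Quotient.eq_zero_iff_mem]
      exact hyJ
    obtain ⟨P, hPass, hPann⟩ :=
      exists_le_isAssociatedPrime_of_isNoetherianRing (MvPolynomial (Fin n) K) y' hy'
    obtain ⟨e, he, rfl⟩ := minimalPrimes_subset E (hAss P hPass)
    obtain ⟨s, hsPe, hsmem'⟩ := exists_avoider (K := K) (E.erase e) (by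
      intro e' he'
      obtain ⟨he'ne, he'E⟩ := Finset.mem_erase.mp he'
      exact Finset.not_subset.mp fun hsub => he'ne (edge_eq_of_subset E hm he'E he hsub))
    have hsmem : ∀ e' ∈ E, e' ≠ e → s ∈ Pe K e' := fun e' he' hne =>
      hsmem' e' (Finset.mem_erase.mpr ⟨hne, he'⟩)
    have hyPe2 : monomial d (1 : K) ∈ (Pe K e) ^ 2 :=
      monomial_mem_Pe_pow_of_le e d 1 2 (by rw [hdsum]; exact hc2.2 e he)
    have hssy : s * s * monomial d (1 : K) ∈ (dualIdeal K E) ^ 2 := by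
      rw [pow_two] at hyPe2 ⊢
      refine Submodule.mul_induction_on
        (C := fun z => s * s * z ∈ dualIdeal K E * dualIdeal K E) hyPe2 ?_ ?_
      · intro p hp q hq
        have h1 : s * p ∈ dualIdeal K E := (mem_dualIdeal E _).mpr fun e' he' => by
          by_cases hne : e' = e
          · subst hne; exact Ideal.mul_mem_left _ _ hp
          · exact Ideal.mul_mem_right _ _ (hsmem e' he' hne)
        have h2 : s * q ∈ dualIdeal K E := (mem_dualIdeal E _).mpr fun e' he' => by
          by_cases hne : e' = e
          · subst hne; exact Ideal.mul_mem_left _ _ hq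
          · exact Ideal.mul_mem_right _ _ (hsmem e' he' hne)
        have hrw : s * s * (p * q) = s * p * (s * q) := by ring
        rw [hrw]
        exact Ideal.mul_mem_mul h1 h2
      · intro x y hx hy
        rw [mul_add]
        exact add_mem hx hy
    have hss : s * s ∈ Pe K e := by
      refine hPann ?_
      rw [Submodule.mem_colon_singleton, Submodule.mem_bot, hy'def]
      show Ideal.Quotient.mk _ (s * s * monomial d (1 : K)) = 0
      rw [Ideal.Quotient.eq_zero_iff_mem]
      exact hssy
    rcases (Pe_isPrime e).mem_or_mem hss with h | h <;> exact hsPe h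
  · -- every A_S decomposes ⇒ no embedded primes
    intro hRHS P hP
    obtain ⟨hPp, x, hx⟩ := isAssociatedPrime_iff.mp hP
    obtain ⟨z, rfl⟩ := Ideal.Quotient.mk_surjective x
    have hKEY := dual_sq_eq E hE hRHS (K := K)
    have hz : z ∉ (dualIdeal K E) ^ 2 := by
      intro hz
      rw [Ideal.Quotient.eq_zero_iff_mem.mpr hz] at hx
      exact hPp.ne_top (by rw [hx]; ext; simp [Submodule.mem_colon_singleton])
    have hJP : (dualIdeal K E) ^ 2 ≤ P := by
      intro u hu
      rw [hx, Submodule.mem_colon_singleton, Submodule.mem_bot]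
      show Ideal.Quotient.mk _ (u * z) = 0
      rw [Ideal.Quotient.eq_zero_iff_mem]
      exact Ideal.mul_mem_right z _ hu
    obtain ⟨e', he', hze'⟩ : ∃ e' ∈ E, z ∉ (Pe K e') ^ 2 := by
      by_contra h
      push_neg at h
      apply hz
      rw [hKEY, Ideal.mem_iInf]
      intro e
      rw [Ideal.mem_iInf]
      intro he
      exact h e he
    have hPle : P ≤ Pe K e' := by
      intro w hw
      have hwz : w * z ∈ (Pe K e') ^ 2 := by
        have h1 : w * z ∈ (dualIdeal K E) ^ 2 := by
          rw [hx, Submodule.mem_colon_singleton, Submodule.mem_bot] at hw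
          have hw' : Ideal.Quotient.mk ((dualIdeal K E) ^ 2) (w * z) = 0 := hw
          rwa [Ideal.Quotient.eq_zero_iff_mem] at hw'
        rw [hKEY] at h1
        exact (Ideal.mem_iInf.mp ((Ideal.mem_iInf.mp h1) e')) he'
      exact Pe_sq_primary e' hwz hze'
    obtain ⟨e, he, hPe⟩ := exists_Pe_le_of_prime E hPp hJP
    have hee' : e ⊆ e' := fun i hi =>
      (X_mem_Pe_iff e' i).mp (hPle (hPe ((X_mem_Pe_iff e i).mpr hi)))
    have heq : e = e' := edge_eq_of_subset E hm he he' hee'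
    have hPeq : P = Pe K e := le_antisymm (heq ▸ hPle) hPe
    rw [hPeq]
    exact Pe_mem_minimalPrimes E hm he
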